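/- Every element of the Lie algebra g₂ ⊂ so(7), viewed as a skew-symmetric 7×7 real matrix, has real rank at least 4 (in particular g₂ contains no matrix of real rank two). -/

import Mathlib

open scoped Quaternion

noncomputable section

/-- The octonions, via the Cayley–Dickson construction `𝕆 = ℍ ⊕ ℍ`. -/
abbrev Oct : Type := ℍ[ℝ] × ℍ[ℝ]

/-- Octonion multiplication (Cayley–Dickson). -/
def omul (x y : Oct) : Oct :=
  (x.1 * y.1 - star y.2 * x.2, y.2 * x.1 + x.2 * star y.1)

/-- Left multiplication `L_q` as a real-linear endomorphism of `𝕆`. -/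
def Lo (q : Oct) : Oct →ₗ[ℝ] Oct where
  toFun y := omul q y
  map_add' y z := by
    simp only [omul, Prod.fst_add, Prod.snd_add, star_add, mul_add, add_mul,
      Prod.mk_add_mk, Prod.mk.injEq]
    constructor <;> abel
  map_smul' c y := by
    simp only [omul, Prod.smul_fst, Prod.smul_snd, Quaternion.star_smul,
      mul_smul_comm, smul_mul_assoc, RingHom.id_apply, Prod.smul_mk, smul_sub,
      smul_add, Prod.mk.injEq]

/-- Right multiplication `R_q` as a real-linear endomorphism of `𝕆`. -/
def Ro (q : Oct) : Oct →ₗ[ℝ] Oct where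
  toFun y := omul y q
  map_add' y z := by
    simp only [omul, Prod.fst_add, Prod.snd_add, star_add, mul_add, add_mul,
      Prod.mk_add_mk, Prod.mk.injEq]
    constructor <;> abel
  map_smul' c y := by
    simp only [omul, Prod.smul_fst, Prod.smul_snd, Quaternion.star_smul,
      mul_smul_comm, smul_mul_assoc, RingHom.id_apply, Prod.smul_mk, smul_sub,
      smul_add, Prod.mk.injEq]

/-- The imaginary octonions. -/
def ImO : Set Oct := {x | x.1.re = 0}

/-- A derivation of the octonions (an element of `g₂ ⊂ so(8)`). -/
def IsOctDer (D : Oct →ₗ[ℝ] Oct) : Prop :=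
  ∀ x y : Oct, D (omul x y) = omul (D x) y + omul x (D y)

/-- The standard inner product on `𝕆 = ℍ ⊕ ℍ`. -/
def innO (x y : Oct) : ℝ := inner ℝ x.1 y.1 + inner ℝ x.2 y.2

/-- Membership in `so(8) = so(𝕆)`: skew-symmetry with respect to `innO`. -/
def IsSkewO (A : Oct →ₗ[ℝ] Oct) : Prop :=
  ∀ x y : Oct, innO (A x) y = - innO x (A y)



/-- The Cayley–Dickson norm on `𝕆`. -/
def No (x : Oct) : ℝ := Quaternion.normSq x.1 + Quaternion.normSq x.2

theorem No_mul (x y : Oct) : No (omul x y) = No x * No y := by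
  obtain ⟨a, b⟩ := x
  obtain ⟨c, d⟩ := y
  simp only [No, omul, Quaternion.normSq_def', Quaternion.re_mul, Quaternion.imI_mul,
    Quaternion.imJ_mul, Quaternion.imK_mul, Quaternion.re_sub, Quaternion.imI_sub,
    Quaternion.imJ_sub, Quaternion.imK_sub, Quaternion.re_add, Quaternion.imI_add,
    Quaternion.imJ_add, Quaternion.imK_add, Quaternion.re_star, Quaternion.imI_star,
    Quaternion.imJ_star, Quaternion.imK_star]
  ring

theorem No_eq_zero {x : Oct} : No x = 0 ↔ x = 0 := by
  constructor
  · intro h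
    have h1 : Quaternion.normSq x.1 ≥ 0 := Quaternion.normSq_nonneg
    have h2 : Quaternion.normSq x.2 ≥ 0 := Quaternion.normSq_nonneg
    have e1 : Quaternion.normSq x.1 = 0 := by simp only [No] at h; linarith
    have e2 : Quaternion.normSq x.2 = 0 := by simp only [No] at h; linarith
    rw [Quaternion.normSq_eq_zero] at e1 e2
    exact Prod.ext e1 e2
  · rintro rfl; simp [No]

/-- The octonions have no zero divisors. -/
theorem omul_eq_zero {x y : Oct} (h : omul x y = 0) (hy : y ≠ 0) : x = 0 := by
  have := No_mul x y
  rw [h, No_eq_zero.2 rfl] at this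
  have hyN : No y ≠ 0 := fun hz => hy (No_eq_zero.1 hz)
  have : No x = 0 := by
    rcases mul_eq_zero.1 this.symm with h' | h'
    · exact h'
    · exact absurd h' hyN
  exact No_eq_zero.1 this

/-- Every nonzero element of `g₂ ⊂ so(7)`, i.e. every nonzero
derivation `D` of the octonions (which automatically annihilates `1` and preserves
`Im 𝕆`, hence is determined by a skew-symmetric `7×7` matrix on `Im 𝕆`), has real rank
at least `4`; in particular `g₂` contains no matrix of real rank two. -/
theorem stmt2 (D : Oct →ₗ[ℝ] Oct) (hD : IsOctDer D) (hne : D ≠ 0) :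
    4 ≤ Module.finrank ℝ (LinearMap.range D) := by
  by_contra hlt
  push_neg at hlt
  obtain ⟨y, hy⟩ : ∃ y, D y ≠ 0 := by
    by_contra h
    push_neg at h
    exact hne (LinearMap.ext fun z => by simp [h z])
  set w : Oct := D y with hw
  have hmem : ∀ a : Oct, a ∈ LinearMap.ker D → omul a w ∈ LinearMap.range D := by
    intro a ha
    have : D (omul a y) = omul (D a) y + omul a (D y) := hD a y
    rw [LinearMap.mem_ker.1 ha] at this
    refine ⟨omul a y, ?_⟩
    rw [this]
    simp [omul, hw]
  let f : LinearMap.ker D →ₗ[ℝ] LinearMap.range D :=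
    LinearMap.codRestrict _ ((Ro w).comp (LinearMap.ker D).subtype)
      (fun a => hmem a a.2)
  have hinj : Function.Injective f := by
    intro a b hab
    have : omul (a : Oct) w = omul (b : Oct) w := congrArg Subtype.val hab
    have hzero : omul ((a : Oct) - b) w = 0 := by
      have hsub : omul ((a : Oct) - b) w = omul (a : Oct) w - omul (b : Oct) w := by
        simp only [omul, Prod.fst_sub, Prod.snd_sub, sub_mul, mul_sub, Prod.mk_sub_mk,
          Prod.mk.injEq]
        constructor <;> abel
      rw [hsub, sub_eq_zero.2 this]
    exact Subtype.ext (sub_eq_zero.1 (omul_eq_zero hzero hy))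
  have hle : Module.finrank ℝ (LinearMap.ker D) ≤ Module.finrank ℝ (LinearMap.range D) :=
    LinearMap.finrank_le_finrank_of_injective hinj
  have hrn := LinearMap.finrank_range_add_finrank_ker D
  have h8 : Module.finrank ℝ Oct = 8 := by
    simp [Module.finrank_prod, Quaternion.finrank_eq_four]
  rw [h8] at hrn
  omega

end
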